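/- Suppose x lies in the T-period-n part of f × g × w and w^T(x, n) > 1. Then for every r ∈ ℕ, R_{nq+r}(x) converges to R_n(T^r x) as q → ∞. -/

import Mathlib

open Finset Filter

noncomputable def cocycle {X : Type*} (T : X → X) (w : X → ℝ) (x : X) (k : ℕ) : ℝ :=
  ∏ j ∈ Finset.range k, w (T^[j] x)

noncomputable def wSum {X : Type*} (T : X → X) (w : X → ℝ) (h : X → ℝ) (n : ℕ) (x : X) : ℝ :=
  ∑ k ∈ Finset.range n, h (T^[k] x) * cocycle T w x k

noncomputable def ratio {X : Type*} (T : X → X) (w f g : X → ℝ) (n : ℕ) (x : X) : ℝ :=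
  wSum T w f n x / wSum T w g n x

def InPeriodPart {X Y : Type*} (T : X → X) (h : X → Y) (n : ℕ) (x : X) : Prop :=
  ∀ k : ℕ, h (T^[k] x) = h (T^[n] (T^[k] x))

lemma cocycle_add' {X : Type*} (T : X → X) (w : X → ℝ) (x : X) (a b : ℕ) :
    cocycle T w x (a + b) = cocycle T w x a * cocycle T w (T^[a] x) b := by
  unfold cocycle
  rw [Finset.prod_range_add]
  congr 1
  refine Finset.prod_congr rfl fun j _ => ?_
  rw [add_comm a j, Function.iterate_add_apply]

lemma wSum_add' {X : Type*} (T : X → X) (w h : X → ℝ) (a b : ℕ) (x : X) :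
    wSum T w h (a + b) x = wSum T w h a x + cocycle T w x a * wSum T w h b (T^[a] x) := by
  unfold wSum
  rw [Finset.sum_range_add, Finset.mul_sum]
  congr 1
  refine Finset.sum_congr rfl fun j _ => ?_
  rw [cocycle_add', add_comm a j, Function.iterate_add_apply]
  ring

lemma cocycle_pos' {X : Type*} (T : X → X) (w : X → ℝ) (hw : ∀ x, 0 < w x)
    (x : X) (k : ℕ) : 0 < cocycle T w x k :=
  Finset.prod_pos fun _ _ => hw _

lemma wSum_pos' {X : Type*} (T : X → X) (w g : X → ℝ) (hw : ∀ x, 0 < w x)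
    (hg : ∀ x, 0 < g x) (x : X) (m : ℕ) (hm : 1 ≤ m) : 0 < wSum T w g m x := by
  refine Finset.sum_pos (fun k _ => mul_pos (hg _) (cocycle_pos' T w hw x k)) ?_
  exact Finset.nonempty_range_iff.mpr (by omega)

lemma wSum_nonneg' {X : Type*} (T : X → X) (w g : X → ℝ) (hw : ∀ x, 0 < w x)
    (hg : ∀ x, 0 < g x) (x : X) (m : ℕ) : 0 ≤ wSum T w g m x :=
  Finset.sum_nonneg fun k _ => le_of_lt (mul_pos (hg _) (cocycle_pos' T w hw x k))

lemma cocycle_shift' {X : Type*} (T : X → X) (w : X → ℝ) (x : X) (n : ℕ)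
    (hwp : ∀ k, w (T^[n + k] x) = w (T^[k] x)) (k : ℕ) :
    cocycle T w (T^[n] x) k = cocycle T w x k := by
  unfold cocycle
  refine Finset.prod_congr rfl fun j _ => ?_
  rw [← Function.iterate_add_apply, add_comm j n, hwp j]

lemma wSum_shift' {X : Type*} (T : X → X) (w h : X → ℝ) (x : X) (n : ℕ)
    (hwp : ∀ k, w (T^[n + k] x) = w (T^[k] x))
    (hhp : ∀ k, h (T^[n + k] x) = h (T^[k] x)) (m : ℕ) :
    wSum T w h m (T^[n] x) = wSum T w h m x := by
  unfold wSum
  refine Finset.sum_congr rfl fun k _ => ?_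
  rw [cocycle_shift' T w x n hwp k, ← Function.iterate_add_apply, add_comm k n, hhp k]

lemma wSum_key' {X : Type*} (T : X → X) (w h : X → ℝ) (x : X) (n : ℕ)
    (hwp : ∀ k, w (T^[n + k] x) = w (T^[k] x))
    (hhp : ∀ k, h (T^[n + k] x) = h (T^[k] x)) (q r : ℕ) :
    wSum T w h (n * q + r) x =
      wSum T w h n x * (∑ i ∈ Finset.range q, (cocycle T w x n) ^ i)
        + (cocycle T w x n) ^ q * wSum T w h r x := by
  induction q with
  | zero => simp
  | succ q ih =>
    have hsplit : n * (q + 1) + r = n + (n * q + r) := by ring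
    rw [hsplit, wSum_add' T w h n (n * q + r) x,
      wSum_shift' T w h x n hwp hhp (n * q + r), ih, geom_sum_succ]
    ring

theorem ratio_tendsto_of_one_lt_cocycle {X : Type*} (T : X → X) (f g w : X → ℝ)
    (hg : ∀ x, 0 < g x) (hw : ∀ x, 0 < w x) (n : ℕ) (hn : 1 ≤ n) (x : X)
    (hx : InPeriodPart T (fun y => (f y, g y, w y)) n x)
    (hcoc : 1 < cocycle T w x n) :
    ∀ r : ℕ,
      Tendsto (fun q : ℕ => ratio T w f g (n * q + r) x) atTop
        (nhds (ratio T w f g n (T^[r] x))) := by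
  intro r
  set c := cocycle T w x n with hc
  have hc0 : (0:ℝ) < c := cocycle_pos' T w hw x n
  have hc1 : (1:ℝ) < c := hcoc
  -- periodicity of the three functions along the orbit
  have htrip : ∀ k, (f (T^[n + k] x), g (T^[n + k] x), w (T^[n + k] x))
      = (f (T^[k] x), g (T^[k] x), w (T^[k] x)) := by
    intro k
    rw [Function.iterate_add_apply]
    exact (hx k).symm
  have hfp : ∀ k, f (T^[n + k] x) = f (T^[k] x) := fun k => congrArg Prod.fst (htrip k)
  have hgp : ∀ k, g (T^[n + k] x) = g (T^[k] x) :=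
    fun k => congrArg (fun p => p.2.1) (htrip k)
  have hwp : ∀ k, w (T^[n + k] x) = w (T^[k] x) :=
    fun k => congrArg (fun p => p.2.2) (htrip k)
  set Bf := wSum T w f n x with hBf
  set Bg := wSum T w g n x with hBg
  set Fr := wSum T w f r x with hFr
  set Gr := wSum T w g r x with hGr
  -- value relations at T^[r] x
  have hCr : (0:ℝ) < cocycle T w x r := cocycle_pos' T w hw x r
  have hvalf : cocycle T w x r * wSum T w f n (T^[r] x) = Bf + (c - 1) * Fr := by
    have h1 := wSum_add' T w f r n x
    have h2 := wSum_key' T w f x n hwp hfp 1 r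
    rw [mul_one] at h2
    rw [add_comm r n] at h1
    rw [h1] at h2
    simp only [geom_sum_one] at h2
    linarith [h2]
  have hvalg : cocycle T w x r * wSum T w g n (T^[r] x) = Bg + (c - 1) * Gr := by
    have h1 := wSum_add' T w g r n x
    have h2 := wSum_key' T w g x n hwp hgp 1 r
    rw [mul_one] at h2
    rw [add_comm r n] at h1
    rw [h1] at h2
    simp only [geom_sum_one] at h2
    linarith [h2]
  -- positivity of limits' denominator
  have hBgpos : (0:ℝ) < Bg := wSum_pos' T w g hw hg x n hn
  have hGrnn : (0:ℝ) ≤ Gr := wSum_nonneg' T w g hw hg x r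
  have hdenpos : (0:ℝ) < Bg + (c - 1) * Gr := by nlinarith
  -- the limit value
  have hlimval : ratio T w f g n (T^[r] x) = (Bf + (c - 1) * Fr) / (Bg + (c - 1) * Gr) := by
    unfold ratio
    have hgpos' : (0:ℝ) < wSum T w g n (T^[r] x) := wSum_pos' T w g hw hg (T^[r] x) n hn
    rw [div_eq_div_iff hgpos'.ne' hdenpos.ne']
    linear_combination (wSum T w g n (T^[r] x)) * hvalf - (wSum T w f n (T^[r] x)) * hvalg
  rw [hlimval]
  -- rewrite each term of the sequence
  have hseq : ∀ q : ℕ, ratio T w f g (n * q + r) x =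
      (Bf * (1 - (c⁻¹) ^ q) + (c - 1) * Fr) / (Bg * (1 - (c⁻¹) ^ q) + (c - 1) * Gr) := by
    intro q
    unfold ratio
    rw [wSum_key' T w f x n hwp hfp q r, wSum_key' T w g x n hwp hgp q r]
    set G := ∑ i ∈ Finset.range q, c ^ i with hG
    set p := c ^ q with hp
    set ip := (c⁻¹) ^ q with hip
    have hgeo : G * (c - 1) = p - 1 := geom_sum_mul c q
    have hcc : p * ip = 1 := by
      rw [hp, hip, ← mul_pow, mul_inv_cancel₀ hc0.ne', one_pow]
    have hT : (c - 1) * ip ≠ 0 := by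
      have hip0 : (0:ℝ) < ip := by positivity
      exact (mul_pos (by linarith) hip0).ne'
    rw [← mul_div_mul_right _ _ hT]
    congr 1
    · linear_combination Bf * ip * hgeo + (Bf + (c - 1) * Fr) * hcc
    · linear_combination Bg * ip * hgeo + (Bg + (c - 1) * Gr) * hcc
  have hfun : (fun q : ℕ => ratio T w f g (n * q + r) x)
      = fun q : ℕ => (Bf * (1 - (c⁻¹) ^ q) + (c - 1) * Fr)
          / (Bg * (1 - (c⁻¹) ^ q) + (c - 1) * Gr) := funext hseq
  rw [hfun]
  -- convergence
  have hpow : Tendsto (fun q : ℕ => (c⁻¹) ^ q) atTop (nhds 0) := by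
    apply tendsto_pow_atTop_nhds_zero_of_lt_one
    · exact le_of_lt (inv_pos.mpr hc0)
    · rw [inv_lt_one_iff₀]; right; exact hc1
  have h1 : Tendsto (fun q : ℕ => (1:ℝ) - (c⁻¹) ^ q) atTop (nhds (1 - 0)) :=
    Tendsto.sub tendsto_const_nhds hpow
  have hnum : Tendsto (fun q : ℕ => Bf * (1 - (c⁻¹) ^ q) + (c - 1) * Fr) atTop
      (nhds (Bf + (c - 1) * Fr)) := by
    have := (h1.const_mul Bf).add (tendsto_const_nhds (x := (c - 1) * Fr))
    simpa using this
  have hden : Tendsto (fun q : ℕ => Bg * (1 - (c⁻¹) ^ q) + (c - 1) * Gr) atTop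
      (nhds (Bg + (c - 1) * Gr)) := by
    have := (h1.const_mul Bg).add (tendsto_const_nhds (x := (c - 1) * Gr))
    simpa using this
  exact hnum.div hden hdenpos.ne'
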